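/- If a probability measure μ on [0,1] ∪ {∞} satisfies ∫_{[0,t]} s dμ(s) = μ([0,t])² for all t ∈ [0,1], and μ([0,t)) = u/2 for some 0 ≤ t ≤ u ≤ 1, then μ([t,u]) = 0. -/

import Mathlib

open MeasureTheory Set Filter
open scoped ENNReal Topology

/-- If a probability measure μ on I = [0,1] ∪ {∞} (encoded in ℝ≥0∞) satisfies
∫_{[0,t]} s dμ(s) = μ([0,t])² for all t ∈ [0,1], and μ([0,t)) = u/2 for some
0 ≤ t ≤ u ≤ 1, then μ([t,u]) = 0. -/
theorem stmt5 (μ : Measure ℝ≥0∞) [IsProbabilityMeasure μ]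
    (hconc : μ {x : ℝ≥0∞ | 1 < x ∧ x ≠ ⊤} = 0)
    (hRDE : ∀ t ∈ Set.Icc (0:ℝ) 1,
      ∫⁻ s in Set.Icc 0 (ENNReal.ofReal t), s ∂μ
        = (μ (Set.Icc 0 (ENNReal.ofReal t)))^2)
    (t u : ℝ) (h0t : 0 ≤ t) (htu : t ≤ u) (hu1 : u ≤ 1)
    (hhalf : μ (Set.Ico 0 (ENNReal.ofReal t)) = ENNReal.ofReal (u/2)) :
    μ (Set.Icc (ENNReal.ofReal t) (ENNReal.ofReal u)) = 0 := by
  have h0u : (0:ℝ) ≤ u := h0t.trans htu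
  -- rewrite Icc 0 = Iic, Ico 0 = Iio
  have hIcc : ∀ x : ℝ≥0∞, Set.Icc 0 x = Set.Iic x := fun x => Set.Icc_bot
  have hIco : ∀ x : ℝ≥0∞, Set.Ico 0 x = Set.Iio x := fun x => Set.Ico_bot
  rw [hIco] at hhalf
  set x := ENNReal.ofReal t with hx
  set u' := ENNReal.ofReal u with hu'
  have hxu : x ≤ u' := ENNReal.ofReal_le_ofReal htu
  have hb_ne : μ (Set.Iic u') ≠ ⊤ := measure_ne_top μ _
  have ha_ne : μ (Set.Iio x) ≠ ⊤ := measure_ne_top μ _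
  -- key inequality at any t' with 0 ≤ t' ≤ t
  have key : ∀ t' : ℝ, 0 ≤ t' → t' ≤ t →
      (μ (Set.Iic u'))^2 ≤ (μ (Set.Iic (ENNReal.ofReal t')))^2
        + u' * (μ (Set.Iic u') - μ (Set.Iic (ENNReal.ofReal t'))) := by
    intro t' h0' h't
    set y := ENNReal.ofReal t' with hy
    have hyu : y ≤ u' := ENNReal.ofReal_le_ofReal (h't.trans htu)
    have h1 : ∫⁻ s in Set.Iic u', s ∂μ = (μ (Set.Iic u'))^2 := by
      have := hRDE u ⟨h0u, hu1⟩; rwa [hIcc] at this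
    have h2 : ∫⁻ s in Set.Iic y, s ∂μ = (μ (Set.Iic y))^2 := by
      have := hRDE t' ⟨h0', (h't.trans htu).trans hu1⟩; rwa [hIcc] at this
    have hsplit : Set.Iic u' = Set.Iic y ∪ Set.Ioc y u' := (Set.Iic_union_Ioc_eq_Iic hyu).symm
    have hdisj : Disjoint (Set.Iic y) (Set.Ioc y u') := Set.Iic_disjoint_Ioc le_rfl
    have hint : ∫⁻ s in Set.Iic u', s ∂μ
        = (∫⁻ s in Set.Iic y, s ∂μ) + ∫⁻ s in Set.Ioc y u', s ∂μ := by
      rw [hsplit, lintegral_union measurableSet_Ioc hdisj]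
    have hbound : ∫⁻ s in Set.Ioc y u', s ∂μ ≤ u' * μ (Set.Ioc y u') := by
      calc ∫⁻ s in Set.Ioc y u', s ∂μ ≤ ∫⁻ _ in Set.Ioc y u', u' ∂μ :=
            setLIntegral_mono measurable_const (fun z hz => hz.2)
        _ = u' * μ (Set.Ioc y u') := setLIntegral_const _ _
    have hmeas : μ (Set.Ioc y u') = μ (Set.Iic u') - μ (Set.Iic y) := by
      rw [show Set.Ioc y u' = Set.Iic u' \ Set.Iic y by ext z; simp [and_comm]]
      exact measure_diff (Set.Iic_subset_Iic.2 hyu) measurableSet_Iic.nullMeasurableSet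
        (measure_ne_top μ _)
    calc (μ (Set.Iic u'))^2 = ∫⁻ s in Set.Iic u', s ∂μ := h1.symm
      _ = (∫⁻ s in Set.Iic y, s ∂μ) + ∫⁻ s in Set.Ioc y u', s ∂μ := hint
      _ ≤ (μ (Set.Iic y))^2 + u' * (μ (Set.Iic u') - μ (Set.Iic y)) := by
          rw [h2]; exact add_le_add le_rfl (hmeas ▸ hbound)
  -- limit: b^2 ≤ a^2 + u'*(b-a) where a = μ (Iio x)
  rcases eq_or_lt_of_le h0t with ht0 | ht0
  · -- t = 0: then u = 0 and μ {0} = 0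
    have hx0 : x = 0 := by rw [hx, ← ht0]; try simp
    have ha0 : μ (Set.Iio x) = 0 := by
      have he : Set.Iio x = ∅ := by rw [hx0]; ext y; simp
      rw [he]; exact measure_empty
    have hu0 : u = 0 := by
      rw [ha0] at hhalf
      have := ENNReal.ofReal_eq_zero.1 hhalf.symm
      linarith
    have hu'0 : u' = 0 := by rw [hu', hu0]; simp
    rw [hx0, hu'0, Set.Icc_self]
    have h2 := hRDE 0 ⟨le_rfl, zero_le_one⟩
    rw [show ENNReal.ofReal (0:ℝ) = 0 by simp, Set.Icc_self, lintegral_singleton] at h2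
    simp only [zero_mul] at h2
    exact pow_eq_zero_iff (n := 2) (by norm_num) |>.1 h2.symm
  have hkey : (μ (Set.Iic u'))^2 ≤ (μ (Set.Iio x))^2 + u' * (μ (Set.Iic u') - μ (Set.Iio x)) := by
    · -- t > 0 : take t_n = t - t/(n+1) ↑ t
      set s : ℕ → Set ℝ≥0∞ := fun n => Set.Iic (ENNReal.ofReal (t - t / (n+1))) with hs
      have htn0 : ∀ n : ℕ, 0 ≤ t - t / (n+1) := by
        intro n
        have : t / ((n:ℝ)+1) ≤ t := by
          rw [div_le_iff₀ (by positivity)]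
          nlinarith [Nat.cast_nonneg (α := ℝ) n]
        linarith
      have htnt : ∀ n : ℕ, t - t / (n+1) < t := by
        intro n; have : 0 < t / ((n:ℝ)+1) := by positivity
        linarith
      have hmono : Monotone s := by
        intro m n hmn
        apply Set.Iic_subset_Iic.2
        apply ENNReal.ofReal_le_ofReal
        have : t / ((n:ℝ)+1) ≤ t / ((m:ℝ)+1) := by
          apply div_le_div_of_nonneg_left ht0.le (by positivity)
          exact_mod_cast Nat.succ_le_succ hmn
        linarith
      have hunion : (⋃ n, s n) = Set.Iio x := by
        ext y; simp only [Set.mem_iUnion, Set.mem_Iic, Set.mem_Iio, hs]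
        constructor
        · rintro ⟨n, hn⟩
          exact lt_of_le_of_lt hn (by
            rw [hx]; exact ENNReal.ofReal_lt_ofReal_iff ht0 |>.2 (htnt n))
        · intro hy
          have hy_ne : y ≠ ⊤ := (hy.trans_le le_top).ne
          have hy' : y.toReal < t := by
            rw [hx] at hy
            exact (ENNReal.lt_ofReal_iff_toReal_lt hy_ne).1 hy
          have : Tendsto (fun n : ℕ => t - t / ((n:ℝ)+1)) atTop (𝓝 (t - 0)) := by
            apply Tendsto.const_sub
            exact Tendsto.div_atTop tendsto_const_nhds (tendsto_atTop_add_const_right _ _ tendsto_natCast_atTop_atTop)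
          rw [sub_zero] at this
          obtain ⟨n, hn⟩ := (this.eventually (eventually_gt_nhds hy')).exists
          exact ⟨n, (ENNReal.le_ofReal_iff_toReal_le hy_ne (htn0 n)).2 hn.le⟩
      have hten : Tendsto (fun n => μ (s n)) atTop (𝓝 (μ (Set.Iio x))) := by
        rw [← hunion]
        exact tendsto_measure_iUnion_atTop hmono
      have hRHS : Tendsto (fun n => (μ (s n))^2 + u' * (μ (Set.Iic u') - μ (s n))) atTop
          (𝓝 ((μ (Set.Iio x))^2 + u' * (μ (Set.Iic u') - μ (Set.Iio x)))) := by
        apply Tendsto.add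
        · exact (ENNReal.continuous_pow 2).continuousAt.tendsto.comp hten
        · exact ENNReal.Tendsto.const_mul
            (ENNReal.Tendsto.sub tendsto_const_nhds hten (Or.inl hb_ne))
            (Or.inr (by rw [hu']; exact ENNReal.ofReal_ne_top))
      exact ge_of_tendsto hRHS (Eventually.of_forall fun n => key _ (htn0 n) (htnt n).le)
  -- convert to reals
  set a := μ (Set.Iio x) with hadef
  set b := μ (Set.Iic u') with hbdef
  have hab : a ≤ b := measure_mono (fun z hz => le_of_lt (lt_of_lt_of_le hz hxu))
  have hA : a.toReal = u / 2 := by rw [hhalf, ENNReal.toReal_ofReal (by linarith)]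
  have hBA : b.toReal = a.toReal := by
    set A := a.toReal with hAr
    set B := b.toReal with hBr
    have hABle : A ≤ B := ENNReal.toReal_le_toReal ha_ne hb_ne |>.2 hab
    have hreal : B^2 ≤ A^2 + u * (B - A) := by
      have h1 : ((μ (Set.Iic u'))^2).toReal ≤ ((μ (Set.Iio x))^2 + u' * (μ (Set.Iic u') - μ (Set.Iio x))).toReal := by
        apply ENNReal.toReal_le_toReal (ENNReal.pow_ne_top hb_ne) ?_ |>.2 hkey
        apply ENNReal.add_ne_top.2
        constructor
        · exact ENNReal.pow_ne_top ha_ne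
        · exact ENNReal.mul_ne_top ENNReal.ofReal_ne_top (ENNReal.sub_ne_top hb_ne)
      rw [ENNReal.toReal_pow, ENNReal.toReal_add (ENNReal.pow_ne_top ha_ne)
          (ENNReal.mul_ne_top ENNReal.ofReal_ne_top (ENNReal.sub_ne_top hb_ne)),
        ENNReal.toReal_pow, ENNReal.toReal_mul, ENNReal.toReal_sub_of_le hab hb_ne,
        ENNReal.toReal_ofReal h0u] at h1
      exact h1
    have : B = A := by nlinarith [hA]
    exact this
  have hba : b = a := (ENNReal.toReal_eq_toReal_iff' hb_ne ha_ne).1 hBA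
  -- conclude
  have hsplit : Set.Iio x ∪ Set.Icc x u' = Set.Iic u' := Set.Iio_union_Icc_eq_Iic hxu
  have hdisj : Disjoint (Set.Iio x) (Set.Icc x u') := (Set.Iio_disjoint_Ici le_rfl).mono_right Set.Icc_subset_Ici_self
  have : a + μ (Set.Icc x u') = b := by
    rw [hbdef, ← hsplit, measure_union hdisj measurableSet_Icc]
  rw [hba] at this
  nth_rewrite 2 [← add_zero a] at this
  exact (ENNReal.add_right_inj ha_ne).1 this
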